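/- Bump lemma for monotone protocols: let Π be a monotone order-oblivious protocol for G_n, let σ be a permutation, and let τ be obtained from σ by moving (bumping) some elements to the end while preserving the relative order of the others. If the first m elements τ₁,…,τ_m of τ were never bumped and Alice wrote 0 on each of the locations τ₁,…,τ_m when streamed σ, then Alice also writes 0 on each of τ₁,…,τ_m when streamed τ. -/
import Mathlib


/-- The partial assignment written by an order-oblivious protocol `B` after `t` steps of
the stream `σ` (the element arriving at time `t` is `σ t`; `B ℓ α` is the bit Alice writes
at an arriving location `ℓ` when the current partial assignment is `α`). -/
def partOO {n : ℕ} (B : Fin n → (Fin n → Option Bool) → Bool) (σ : Equiv.Perm (Fin n)) :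
    ℕ → (Fin n → Option Bool)
  | 0 => fun _ => none
  | t + 1 =>
    if h : t < n then
      Function.update (partOO B σ t) (σ ⟨t, h⟩) (some (B (σ ⟨t, h⟩) (partOO B σ t)))
    else partOO B σ t

/-- The bit written by the order-oblivious protocol `B` at location `ℓ` on stream `σ`. -/
def writeOO {n : ℕ} (B : Fin n → (Fin n → Option Bool) → Bool) (σ : Equiv.Perm (Fin n))
    (ℓ : Fin n) : Bool :=
  B ℓ (partOO B σ ((σ.symm ℓ : ℕ)))

/-- The hypercube edge `Π_A(σ)`: the array written after the first `n - 1` steps, with a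
single unfilled (`none`) coordinate at the last location `σ (n-1)`. -/
def edgeOO {n : ℕ} (B : Fin n → (Fin n → Option Bool) → Bool) (σ : Equiv.Perm (Fin n)) :
    Fin n → Option Bool :=
  partOO B σ (n - 1)

/-- `v ∈ {0,1}^n` is an endpoint of the edge `e` (with `*` encoded as `none`). -/
def Compatible {n : ℕ} (v : Fin n → Bool) (e : Fin n → Option Bool) : Prop :=
  ∀ ℓ b, e ℓ = some b → v ℓ = b

/-- The degree of the vertex `v` in the graph `E(Π)` of the order-oblivious protocol `B`. -/
noncomputable def degOO {n : ℕ} (B : Fin n → (Fin n → Option Bool) → Bool)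
    (v : Fin n → Bool) : ℕ :=
  {e : Fin n → Option Bool | (∃ σ : Equiv.Perm (Fin n), edgeOO B σ = e) ∧
    Compatible v e}.ncard

/-- `β` extends `α` as a partial assignment. -/
def OExtends {n : ℕ} (α β : Fin n → Option Bool) : Prop :=
  ∀ ℓ b, α ℓ = some b → β ℓ = some b

/-- The protocol `B` is monotone: each map `A_ℓ` is monotone w.r.t. the extension order. -/
def MonotoneOO {n : ℕ} (B : Fin n → (Fin n → Option Bool) → Bool) : Prop :=
  ∀ (ℓ : Fin n) (α β : Fin n → Option Bool), OExtends α β → B ℓ α = true → B ℓ β = true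

/-- `τ` is obtained from `σ` by bumping the elements of `S` to the end: the elements not
in `S` keep their relative order and all precede the elements of `S` in `τ`. -/
def IsBump {n : ℕ} (σ τ : Equiv.Perm (Fin n)) (S : Finset (Fin n)) : Prop :=
  (∀ ℓ m : Fin n, ℓ ∉ S → m ∉ S → (σ.symm ℓ ≤ σ.symm m ↔ τ.symm ℓ ≤ τ.symm m)) ∧
  (∀ ℓ m : Fin n, ℓ ∉ S → m ∈ S → τ.symm ℓ < τ.symm m)


lemma partOO_eq {n : ℕ} (B : Fin n → (Fin n → Option Bool) → Bool) (σ : Equiv.Perm (Fin n)) :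
    ∀ t, t ≤ n → ∀ ℓ : Fin n,
      partOO B σ t ℓ = if (σ.symm ℓ : ℕ) < t then some (writeOO B σ ℓ) else none := by
  intro t
  induction t with
  | zero => intro _ ℓ; simp [partOO]
  | succ t ih =>
    intro ht ℓ
    have h : t < n := ht
    rw [partOO, dif_pos h]
    by_cases hℓ : ℓ = σ ⟨t, h⟩
    · subst hℓ
      have hs : σ.symm (σ ⟨t, h⟩) = ⟨t, h⟩ := Equiv.symm_apply_apply σ _
      rw [Function.update_self, if_pos (by rw [hs]; exact Nat.lt_succ_self t)]
      unfold writeOO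
      rw [hs]
    · have hne : σ.symm ℓ ≠ ⟨t, h⟩ := fun e => hℓ (by rw [← e, Equiv.apply_symm_apply])
      have hne' : (σ.symm ℓ : ℕ) ≠ t := fun e => hne (Fin.ext e)
      rw [Function.update_of_ne hℓ, ih (le_of_lt h)]
      by_cases hc : (σ.symm ℓ : ℕ) < t
      · rw [if_pos hc, if_pos (Nat.lt_succ_of_lt hc)]
      · rw [if_neg hc, if_neg (by omega)]

/-- bump lemma: let `B` be a monotone order-oblivious protocol, and let
`τ` be obtained from `σ` by bumping the elements of `S` to the end.  If the first `m`
elements of `τ` are not bumped and Alice wrote `0` on each of them when streamed `σ`,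
then she also writes `0` on each of them when streamed `τ`. -/
theorem bump_lemma {n : ℕ} (B : Fin n → (Fin n → Option Bool) → Bool)
    (hB : MonotoneOO B) (σ τ : Equiv.Perm (Fin n)) (S : Finset (Fin n))
    (hbump : IsBump σ τ S) (m : ℕ)
    (hfirst : ∀ t : Fin n, (t : ℕ) < m → τ t ∉ S)
    (hzero : ∀ t : Fin n, (t : ℕ) < m → writeOO B σ (τ t) = false) :
    ∀ t : Fin n, (t : ℕ) < m → writeOO B τ (τ t) = false := by
  have key : ∀ t : ℕ, ∀ h : t < n, t < m → writeOO B τ (τ ⟨t, h⟩) = false := by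
    intro t
    induction t using Nat.strong_induction_on with
    | _ t ih =>
      intro h htm
      have htn : t ≤ n := le_of_lt h
      have hτt : τ.symm (τ ⟨t, h⟩) = ⟨t, h⟩ := Equiv.symm_apply_apply τ _
      have hext : OExtends (partOO B τ t) (partOO B σ ((σ.symm (τ ⟨t, h⟩) : ℕ))) := by
        intro ℓ b hb
        rw [partOO_eq B τ t htn ℓ] at hb
        by_cases hc : (τ.symm ℓ : ℕ) < t
        · rw [if_pos hc] at hb
          set s : Fin n := τ.symm ℓ with hs
          have hℓ : ℓ = τ s := by rw [hs, Equiv.apply_symm_apply]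
          have hsm : (s : ℕ) < m := lt_trans hc htm
          have hwσ : writeOO B σ ℓ = false := by rw [hℓ]; exact hzero s hsm
          have hwτ : writeOO B τ ℓ = false := by
            rw [hℓ]
            have hseq : (⟨(s : ℕ), s.isLt⟩ : Fin n) = s := Fin.ext rfl
            have := ih (s : ℕ) hc s.isLt hsm
            rwa [hseq] at this
          have hb' : b = false := by
            rw [hwτ] at hb; exact (Option.some_inj.mp hb).symm
          rw [partOO_eq B σ _ (le_of_lt (σ.symm (τ ⟨t, h⟩)).isLt) ℓ]
          have hℓS : ℓ ∉ S := by rw [hℓ]; exact hfirst s hsm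
          have htS : τ ⟨t, h⟩ ∉ S := hfirst ⟨t, h⟩ htm
          have hle : σ.symm ℓ ≤ σ.symm (τ ⟨t, h⟩) :=
            (hbump.1 ℓ (τ ⟨t, h⟩) hℓS htS).mpr (by rw [hτt, ← hs]; exact le_of_lt hc)
          have hneq : σ.symm ℓ ≠ σ.symm (τ ⟨t, h⟩) := by
            intro e
            have : ℓ = τ ⟨t, h⟩ := by
              have := congrArg σ e
              rwa [Equiv.apply_symm_apply, Equiv.apply_symm_apply] at this
            rw [this, hτt] at hs
            have : (s : ℕ) = t := by rw [hs]
            omega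
          have hlt : (σ.symm ℓ : ℕ) < (σ.symm (τ ⟨t, h⟩) : ℕ) :=
            lt_of_le_of_ne hle (fun e => hneq (Fin.ext e))
          rw [if_pos hlt, hwσ, hb']
        · rw [if_neg hc] at hb; exact absurd hb (by simp)
      have hσ0 : B (τ ⟨t, h⟩) (partOO B σ ((σ.symm (τ ⟨t, h⟩) : ℕ))) = false :=
        hzero ⟨t, h⟩ htm
      have : writeOO B τ (τ ⟨t, h⟩) = B (τ ⟨t, h⟩) (partOO B τ t) := by
        unfold writeOO; rw [hτt]
      rw [this]
      by_contra hc
      have := hB (τ ⟨t, h⟩) _ _ hext (eq_true_of_ne_false hc)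
      rw [hσ0] at this; exact Bool.false_ne_true this
  intro t ht
  have hseq : (⟨(t : ℕ), t.isLt⟩ : Fin n) = t := Fin.ext rfl
  have := key (t : ℕ) t.isLt ht
  rwa [hseq] at this
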